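/- arXiv:2310.13406 — 3 statements merged into one kernel-verified Lean document; each statement's English description precedes it below -/
import Mathlib

section
/- If A(S,N) solves the Popov equation ∂²A/∂N² + 2i ∂A/∂S + 4γNSA = 0, then the function Ã(X,Y) defined by Ã(S, N - γS³/3) = exp(-i(γNS² - γ²S⁵/10)) A(S,N) solves the parabolic wave equation ∂²Ã/∂Y² + 2i ∂Ã/∂X = 0. -/
open Complex

/-- If `A` solves the Popov equation
`∂²A/∂N² + 2i ∂A/∂S + 4γNS A = 0`, then `Ã(X,Y) := exp(-i(γNX² - γ²X⁵/10)) A(X, Y + γX³/3)`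
(with `N = Y + γX³/3`), i.e. `Ã(S, N - γS³/3) = exp(-i(γNS² - γ²S⁵/10)) A(S,N)`,
solves the parabolic wave equation `∂²Ã/∂Y² + 2i ∂Ã/∂X = 0`. -/
theorem popov_to_parabolic (γ : ℝ) (hγ : 0 < γ)
    (A Atil : ℝ → ℝ → ℂ)
    (hA : ContDiff ℝ 2 (fun p : ℝ × ℝ => A p.1 p.2))
    (hPopov : ∀ S N : ℝ,
      deriv (fun n => deriv (fun n' => A S n') n) N
        + 2 * I * deriv (fun s => A s N) S
        + 4 * (γ : ℂ) * (N : ℂ) * (S : ℂ) * A S N = 0)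
    (hdef : ∀ S N : ℝ,
      Atil S (N - γ * S ^ 3 / 3)
        = Complex.exp (-I * ((γ : ℂ) * N * S ^ 2 - (γ : ℂ) ^ 2 * S ^ 5 / 10)) * A S N) :
    ∀ X Y : ℝ,
      deriv (fun y => deriv (fun y' => Atil X y') y) Y
        + 2 * I * deriv (fun x => Atil x Y) X = 0 := by
  intro X Y
  -- explicit form of Atil
  have hAtil : ∀ x y : ℝ, Atil x y
      = Complex.exp (-I * ((γ:ℂ) * ((y:ℂ) + (γ:ℂ) * (x:ℂ)^3/3) * (x:ℂ)^2
          - (γ:ℂ)^2 * (x:ℂ)^5/10)) * A x (y + γ * x^3/3) := by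
    intro x y
    have h2 : y + γ * x^3/3 - γ * x^3/3 = y := by ring
    have h := hdef x (y + γ * x^3/3)
    rw [h2] at h
    rw [h]
    congr 2
    push_cast
    ring
  simp only [hAtil]
  set N : ℝ := Y + γ * X^3/3 with hN
  -- basic differentiability facts
  have hfd : Differentiable ℝ (fun p : ℝ × ℝ => A p.1 p.2) := hA.differentiable (by norm_num)
  have hgC : ContDiff ℝ 2 (fun n : ℝ => A X n) := hA.comp (contDiff_const.prodMk contDiff_id)
  have h21 : (2 : WithTop ℕ∞) = 1 + 1 := by norm_num
  rw [h21] at hgC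
  have hgC' : ContDiff ℝ 1 (deriv (fun n : ℝ => A X n)) := (contDiff_succ_iff_deriv.mp hgC).2.2
  have hgdiff : Differentiable ℝ (fun n : ℝ => A X n) := (contDiff_succ_iff_deriv.mp hgC).1
  have hg'diff : Differentiable ℝ (deriv (fun n : ℝ => A X n)) := hgC'.differentiable one_ne_zero
  -- derivative of the y-translation
  have hAy : ∀ y : ℝ, HasDerivAt (fun y' : ℝ => A X (y' + γ * X^3/3))
      ((1:ℝ) • deriv (fun n : ℝ => A X n) (y + γ * X^3/3)) y := by
    intro y
    exact HasDerivAt.scomp y ((hgdiff _).hasDerivAt) ((hasDerivAt_id y).add_const _)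
  have hAy' : ∀ y : ℝ, HasDerivAt (fun y' : ℝ => deriv (fun n : ℝ => A X n) (y' + γ * X^3/3))
      ((1:ℝ) • deriv (deriv (fun n : ℝ => A X n)) (y + γ * X^3/3)) y := by
    intro y
    exact HasDerivAt.scomp y ((hg'diff _).hasDerivAt) ((hasDerivAt_id y).add_const _)
  -- derivative of the phase in y
  have hcoe : ∀ y : ℝ, HasDerivAt (fun t : ℝ => (t : ℂ)) 1 y := by
    intro y
    simpa using (hasDerivAt_id y).ofReal_comp
  have hphase : ∀ y : ℝ, HasDerivAt
      (fun y' : ℝ => Complex.exp (-I * ((γ:ℂ) * ((y':ℂ) + (γ:ℂ) * (X:ℂ)^3/3) * (X:ℂ)^2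
          - (γ:ℂ)^2 * (X:ℂ)^5/10)))
      (Complex.exp (-I * ((γ:ℂ) * ((y:ℂ) + (γ:ℂ) * (X:ℂ)^3/3) * (X:ℂ)^2
          - (γ:ℂ)^2 * (X:ℂ)^5/10)) * (-I * ((γ:ℂ) * 1 * (X:ℂ)^2))) y := by
    intro y
    exact (((((hcoe y).add_const _).const_mul ((γ:ℂ))).mul_const ((X:ℂ)^2)).sub_const
      ((γ:ℂ)^2 * (X:ℂ)^5/10)).const_mul (-I) |>.cexp
  -- first y-derivative
  have hD1 : ∀ y : ℝ, HasDerivAt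
      (fun y' : ℝ => Complex.exp (-I * ((γ:ℂ) * ((y':ℂ) + (γ:ℂ) * (X:ℂ)^3/3) * (X:ℂ)^2
          - (γ:ℂ)^2 * (X:ℂ)^5/10)) * A X (y' + γ * X^3/3))
      (Complex.exp (-I * ((γ:ℂ) * ((y:ℂ) + (γ:ℂ) * (X:ℂ)^3/3) * (X:ℂ)^2
          - (γ:ℂ)^2 * (X:ℂ)^5/10)) *
        (-I * ((γ:ℂ) * (X:ℂ)^2) * A X (y + γ * X^3/3)
          + deriv (fun n : ℝ => A X n) (y + γ * X^3/3))) y := by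
    intro y
    have := (hphase y).mul (hAy y)
    convert this using 1
    · rfl
    · rfl
    simp only [one_smul]
    ring
  have hrw1 : (fun y : ℝ => deriv (fun y' : ℝ =>
      Complex.exp (-I * ((γ:ℂ) * ((y':ℂ) + (γ:ℂ) * (X:ℂ)^3/3) * (X:ℂ)^2
          - (γ:ℂ)^2 * (X:ℂ)^5/10)) * A X (y' + γ * X^3/3)) y)
      = fun y : ℝ => Complex.exp (-I * ((γ:ℂ) * ((y:ℂ) + (γ:ℂ) * (X:ℂ)^3/3) * (X:ℂ)^2
          - (γ:ℂ)^2 * (X:ℂ)^5/10)) *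
        (-I * ((γ:ℂ) * (X:ℂ)^2) * A X (y + γ * X^3/3)
          + deriv (fun n : ℝ => A X n) (y + γ * X^3/3)) :=
    funext fun y => (hD1 y).deriv
  -- second y-derivative
  have hD2 : HasDerivAt
      (fun y : ℝ => Complex.exp (-I * ((γ:ℂ) * ((y:ℂ) + (γ:ℂ) * (X:ℂ)^3/3) * (X:ℂ)^2
          - (γ:ℂ)^2 * (X:ℂ)^5/10)) *
        (-I * ((γ:ℂ) * (X:ℂ)^2) * A X (y + γ * X^3/3)
          + deriv (fun n : ℝ => A X n) (y + γ * X^3/3)))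
      (Complex.exp (-I * ((γ:ℂ) * ((Y:ℂ) + (γ:ℂ) * (X:ℂ)^3/3) * (X:ℂ)^2
          - (γ:ℂ)^2 * (X:ℂ)^5/10)) * (-I * ((γ:ℂ) * 1 * (X:ℂ)^2)) *
        (-I * ((γ:ℂ) * (X:ℂ)^2) * A X N + deriv (fun n : ℝ => A X n) N)
       + Complex.exp (-I * ((γ:ℂ) * ((Y:ℂ) + (γ:ℂ) * (X:ℂ)^3/3) * (X:ℂ)^2
          - (γ:ℂ)^2 * (X:ℂ)^5/10)) *
        (-I * ((γ:ℂ) * (X:ℂ)^2) * ((1:ℝ) • deriv (fun n : ℝ => A X n) N)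
          + (1:ℝ) • deriv (deriv (fun n : ℝ => A X n)) N)) Y := by
    exact (hphase Y).mul (((hAy Y).const_mul (-I * ((γ:ℂ) * (X:ℂ)^2))).add (hAy' Y))
  -- X-part: fderiv machinery
  have hFs : HasDerivAt (fun s : ℝ => A s N)
      (fderiv ℝ (fun p : ℝ × ℝ => A p.1 p.2) (X, N) (1, 0)) X := by
    have := ((hfd (X, N)).hasFDerivAt).comp_hasDerivAt X
      ((hasDerivAt_id X).prodMk (hasDerivAt_const X N))
    simpa [Function.comp_def] using this
  have hFn : HasDerivAt (fun n : ℝ => A X n)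
      (fderiv ℝ (fun p : ℝ × ℝ => A p.1 p.2) (X, N) (0, 1)) N := by
    have := ((hfd (X, N)).hasFDerivAt).comp_hasDerivAt N
      ((hasDerivAt_const N X).prodMk (hasDerivAt_id N))
    simpa [Function.comp_def] using this
  -- the curve x ↦ (x, Y + γx³/3)
  have hcurve : HasDerivAt (fun x : ℝ => ((x, Y + γ * x^3/3) : ℝ × ℝ))
      ((1, γ * ((3:ℕ) * X^2)/3) : ℝ × ℝ) X :=
    (hasDerivAt_id X).prodMk ((((hasDerivAt_pow 3 X).const_mul γ).div_const 3).const_add Y)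
  have hAx : HasDerivAt (fun x : ℝ => A x (Y + γ * x^3/3))
      (fderiv ℝ (fun p : ℝ × ℝ => A p.1 p.2) (X, N) ((1, γ * ((3:ℕ) * X^2)/3) : ℝ × ℝ)) X := by
    have := ((hfd (X, N)).hasFDerivAt).comp_hasDerivAt X hcurve
    simpa [hN, Function.comp_def] using this
  have hsplit : fderiv ℝ (fun p : ℝ × ℝ => A p.1 p.2) (X, N) ((1, γ * ((3:ℕ) * X^2)/3) : ℝ × ℝ)
      = deriv (fun s : ℝ => A s N) X
        + ((γ * ((3:ℕ) * X^2)/3 : ℝ) : ℂ) * deriv (fun n : ℝ => A X n) N := by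
    have hv : ((1, γ * ((3:ℕ) * X^2)/3) : ℝ × ℝ)
        = (1, 0) + (γ * ((3:ℕ) * X^2)/3 : ℝ) • ((0, 1) : ℝ × ℝ) := by
      simp [Prod.ext_iff]
    rw [hv, map_add, map_smul, hFs.deriv, hFn.deriv, Complex.real_smul]
  -- phase derivative in x
  have hpow : ∀ n : ℕ, HasDerivAt (fun x : ℝ => (x:ℂ)^n) ((n:ℂ) * (X:ℂ)^(n-1)) X :=
    fun n => (hasDerivAt_pow n (X:ℂ)).comp_ofReal
  have step2 := (((hpow 3).const_mul (γ:ℂ)).div_const 3).const_add (Y:ℂ)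
  have step4 := ((step2.const_mul (γ:ℂ)).mul (hpow 2)).sub
    (((hpow 5).const_mul ((γ:ℂ)^2)).div_const 10)
  have step6 := (step4.const_mul (-I)).cexp
  have hxfull := step6.mul hAx
  simp only [Pi.mul_def, Pi.sub_def] at hxfull
  rw [hrw1, hD2.deriv, hxfull.deriv, hsplit]
  have hNc : ((N : ℝ) : ℂ) = (Y:ℂ) + (γ:ℂ) * (X:ℂ)^3/3 := by rw [hN]; push_cast; ring
  have hp := hPopov X N
  simp only [one_smul]
  have hfold : A X (Y + γ * X ^ 3 / 3) = A X N := by rw [hN]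
  rw [hfold]
  push_cast
  linear_combination Complex.exp (-I * ((γ:ℂ) * ((Y:ℂ) + (γ:ℂ) * (X:ℂ)^3/3) * (X:ℂ)^2
      - (γ:ℂ)^2 * (X:ℂ)^5/10)) * hp
    + (-4*(γ:ℂ)*((Y:ℂ) + (γ:ℂ)*(X:ℂ)^3/3)*(X:ℂ) * Complex.exp (-I * ((γ:ℂ) * ((Y:ℂ)
        + (γ:ℂ) * (X:ℂ)^3/3) * (X:ℂ)^2 - (γ:ℂ)^2 * (X:ℂ)^5/10)) * A X N) * Complex.I_sq
    + (-4*(γ:ℂ)*(X:ℂ) * Complex.exp (-I * ((γ:ℂ) * ((Y:ℂ) + (γ:ℂ) * (X:ℂ)^3/3) * (X:ℂ)^2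
        - (γ:ℂ)^2 * (X:ℂ)^5/10)) * (A X N)) * hNc
end

section
/- Conversely, if Ã(X,Y) solves the parabolic wave equation ∂²Ã/∂Y² + 2i ∂Ã/∂X = 0, then A(S,N) := exp(i(γNS² - γ²S⁵/10)) Ã(S, N - γS³/3) solves the Popov equation ∂²A/∂N² + 2i ∂A/∂S + 4γNSA = 0. -/
open Complex

/-- If `Ã` solves the parabolic wave equation `∂²Ã/∂Y² + 2i ∂Ã/∂X = 0`,
then `A(S,N) := exp(i(γNS² - γ²S⁵/10)) Ã(S, N - γS³/3)` solves the Popov equation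
`∂²A/∂N² + 2i ∂A/∂S + 4γNS A = 0`. -/
theorem parabolic_to_popov (γ : ℝ) (hγ : 0 < γ)
    (Atil : ℝ → ℝ → ℂ)
    (hAtil : ContDiff ℝ 2 (fun p : ℝ × ℝ => Atil p.1 p.2))
    (hPWE : ∀ X Y : ℝ,
      deriv (fun y => deriv (fun y' => Atil X y') y) Y
        + 2 * I * deriv (fun x => Atil x Y) X = 0)
    (A : ℝ → ℝ → ℂ)
    (hdef : ∀ S N : ℝ,
      A S N = Complex.exp (I * ((γ : ℂ) * N * S ^ 2 - (γ : ℂ) ^ 2 * S ^ 5 / 10))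
        * Atil S (N - γ * S ^ 3 / 3)) :
    ∀ S N : ℝ,
      deriv (fun n => deriv (fun n' => A S n') n) N
        + 2 * I * deriv (fun s => A s N) S
        + 4 * (γ : ℂ) * (N : ℂ) * (S : ℂ) * A S N = 0 := by
  intro S N
  set f : ℝ × ℝ → ℂ := fun p => Atil p.1 p.2 with hf
  have hf1 : Differentiable ℝ f := hAtil.differentiable two_ne_zero
  -- first partial derivatives
  have hAy : ∀ X Y : ℝ, HasDerivAt (fun y => Atil X y) (fderiv ℝ f (X, Y) (0, 1)) Y := by
    intro X Y
    have hc : HasDerivAt (fun y : ℝ => (X, y)) ((0 : ℝ), (1 : ℝ)) Y :=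
      HasDerivAt.prodMk (hasDerivAt_const Y X) (hasDerivAt_id Y)
    exact (hf1 (X, Y)).hasFDerivAt.comp_hasDerivAt Y hc
  have hAx : ∀ X Y : ℝ, HasDerivAt (fun x => Atil x Y) (fderiv ℝ f (X, Y) (1, 0)) X := by
    intro X Y
    have hc : HasDerivAt (fun x : ℝ => (x, Y)) ((1 : ℝ), (0 : ℝ)) X :=
      HasDerivAt.prodMk (hasDerivAt_id X) (hasDerivAt_const X Y)
    exact (hf1 (X, Y)).hasFDerivAt.comp_hasDerivAt X hc
  -- second partial in y
  set F1 : ℝ × ℝ → ℂ := fun p => fderiv ℝ f p (0, 1) with hF1def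
  have hF1 : Differentiable ℝ F1 := by
    have h1 : ContDiff ℝ 1 (fun p => fderiv ℝ f p) := hAtil.fderiv_right (by norm_num)
    exact (h1.clm_apply contDiff_const).differentiable one_ne_zero
  have hAyy : ∀ X Y : ℝ, HasDerivAt (fun y => F1 (X, y)) (fderiv ℝ F1 (X, Y) (0, 1)) Y := by
    intro X Y
    have hc : HasDerivAt (fun y : ℝ => (X, y)) ((0 : ℝ), (1 : ℝ)) Y :=
      HasDerivAt.prodMk (hasDerivAt_const Y X) (hasDerivAt_id Y)
    exact (hF1 (X, Y)).hasFDerivAt.comp_hasDerivAt Y hc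
  -- PWE in fderiv form
  have hpwe : ∀ X Y : ℝ,
      fderiv ℝ F1 (X, Y) (0, 1) + 2 * I * fderiv ℝ f (X, Y) (1, 0) = 0 := by
    intro X Y
    have h1 : (fun y => deriv (fun y' => Atil X y') y) = fun y => F1 (X, y) :=
      funext fun y => (hAy X y).deriv
    have h := hPWE X Y
    rw [h1, (hAyy X Y).deriv, (hAx X Y).deriv] at h
    exact h
  -- helper: derivative of the complex coercion
  have h0 : ∀ x : ℝ, HasDerivAt (fun t : ℝ => (t : ℂ)) 1 x := fun x => by
    exact Complex.ofRealCLM.hasDerivAt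
  -- exponential in n
  have hexp : ∀ n : ℝ, HasDerivAt
      (fun n' : ℝ => Complex.exp (I * ((γ : ℂ) * n' * (S:ℂ) ^ 2 - (γ : ℂ) ^ 2 * (S:ℂ) ^ 5 / 10)))
      (Complex.exp (I * ((γ : ℂ) * n * (S:ℂ) ^ 2 - (γ : ℂ) ^ 2 * (S:ℂ) ^ 5 / 10))
        * (I * ((γ : ℂ) * 1 * (S:ℂ) ^ 2))) n := by
    intro n
    exact (((((h0 n).const_mul ((γ:ℂ))).mul_const ((S:ℂ)^2)).sub_const
      ((γ:ℂ)^2 * (S:ℂ)^5 / 10)).const_mul I).cexp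
  -- derivative of n ↦ Atil S (n - γS³/3)
  have hshift : ∀ n : ℝ, HasDerivAt
      (fun n' : ℝ => Atil S (n' - γ * S ^ 3 / 3))
      (F1 (S, n - γ * S ^ 3 / 3)) n := by
    intro n
    simpa [Function.comp_def] using (hAy S (n - γ * S ^ 3 / 3)).scomp n ((hasDerivAt_id n).sub_const (γ * S ^ 3 / 3))
  -- first derivative of A in n, at every n
  have hder1 : ∀ n : ℝ, HasDerivAt (fun n' => A S n')
      (Complex.exp (I * ((γ : ℂ) * n * (S:ℂ) ^ 2 - (γ : ℂ) ^ 2 * (S:ℂ) ^ 5 / 10))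
          * (I * ((γ : ℂ) * 1 * (S:ℂ) ^ 2)) * Atil S (n - γ * S ^ 3 / 3)
        + Complex.exp (I * ((γ : ℂ) * n * (S:ℂ) ^ 2 - (γ : ℂ) ^ 2 * (S:ℂ) ^ 5 / 10))
          * F1 (S, n - γ * S ^ 3 / 3)) n := by
    intro n
    have heq : (fun n' : ℝ => A S n') = fun n' : ℝ =>
        Complex.exp (I * ((γ : ℂ) * n' * (S:ℂ) ^ 2 - (γ : ℂ) ^ 2 * (S:ℂ) ^ 5 / 10))
          * Atil S (n' - γ * S ^ 3 / 3) := funext fun n' => hdef S n'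
    rw [heq]
    exact (hexp n).mul (hshift n)
  -- second derivative of A in n at N
  have hshift2 : HasDerivAt
      (fun n : ℝ => F1 (S, n - γ * S ^ 3 / 3))
      (fderiv ℝ F1 (S, N - γ * S ^ 3 / 3) (0, 1)) N := by
    simpa [Function.comp_def] using (hAyy S (N - γ * S ^ 3 / 3)).scomp N ((hasDerivAt_id N).sub_const (γ * S ^ 3 / 3))
  have hder2 : HasDerivAt (fun n => deriv (fun n' => A S n') n)
      ((Complex.exp (I * ((γ : ℂ) * N * (S:ℂ) ^ 2 - (γ : ℂ) ^ 2 * (S:ℂ) ^ 5 / 10))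
          * (I * ((γ : ℂ) * 1 * (S:ℂ) ^ 2)) * (I * ((γ : ℂ) * 1 * (S:ℂ) ^ 2))
          * Atil S (N - γ * S ^ 3 / 3)
        + Complex.exp (I * ((γ : ℂ) * N * (S:ℂ) ^ 2 - (γ : ℂ) ^ 2 * (S:ℂ) ^ 5 / 10))
          * (I * ((γ : ℂ) * 1 * (S:ℂ) ^ 2)) * F1 (S, N - γ * S ^ 3 / 3))
       + (Complex.exp (I * ((γ : ℂ) * N * (S:ℂ) ^ 2 - (γ : ℂ) ^ 2 * (S:ℂ) ^ 5 / 10))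
          * (I * ((γ : ℂ) * 1 * (S:ℂ) ^ 2)) * F1 (S, N - γ * S ^ 3 / 3)
        + Complex.exp (I * ((γ : ℂ) * N * (S:ℂ) ^ 2 - (γ : ℂ) ^ 2 * (S:ℂ) ^ 5 / 10))
          * fderiv ℝ F1 (S, N - γ * S ^ 3 / 3) (0, 1))) N := by
    have heq : (fun n => deriv (fun n' => A S n') n) = fun n : ℝ =>
        Complex.exp (I * ((γ : ℂ) * n * (S:ℂ) ^ 2 - (γ : ℂ) ^ 2 * (S:ℂ) ^ 5 / 10))
          * (I * ((γ : ℂ) * 1 * (S:ℂ) ^ 2)) * Atil S (n - γ * S ^ 3 / 3)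
        + Complex.exp (I * ((γ : ℂ) * n * (S:ℂ) ^ 2 - (γ : ℂ) ^ 2 * (S:ℂ) ^ 5 / 10))
          * F1 (S, n - γ * S ^ 3 / 3) := funext fun n => (hder1 n).deriv
    rw [heq]
    exact ((((hexp N).mul_const _).mul (hshift N)).add ((hexp N).mul hshift2))
  -- derivative of A in s at S
  have hexpS : HasDerivAt
      (fun s : ℝ => Complex.exp (I * ((γ : ℂ) * (N:ℂ) * (s:ℂ) ^ 2 - (γ : ℂ) ^ 2 * (s:ℂ) ^ 5 / 10)))
      (Complex.exp (I * ((γ : ℂ) * (N:ℂ) * (S:ℂ) ^ 2 - (γ : ℂ) ^ 2 * (S:ℂ) ^ 5 / 10))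
        * (I * ((γ : ℂ) * (N:ℂ) * (2 * (S:ℂ)) - (γ : ℂ) ^ 2 * (5 * (S:ℂ) ^ 4) / 10))) S := by
    have h1 : HasDerivAt (fun s : ℝ => ((s:ℂ)) ^ 2) (2 * (S:ℂ)) S := by
      simpa using (hasDerivAt_pow 2 ((S:ℂ))).comp_ofReal
    have h2 : HasDerivAt (fun s : ℝ => ((s:ℂ)) ^ 5) (5 * (S:ℂ) ^ 4) S := by
      simpa using (hasDerivAt_pow 5 ((S:ℂ))).comp_ofReal
    exact (((h1.const_mul ((γ:ℂ) * (N:ℂ))).sub ((h2.const_mul ((γ:ℂ)^2)).div_const 10)).const_mul I).cexp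
  have hcurve : HasDerivAt (fun s : ℝ => (s, N - γ * s ^ 3 / 3))
      ((1 : ℝ), (0 : ℝ) - γ * (3 * S ^ 2 * 1) / 3) S := by
    exact HasDerivAt.prodMk (hasDerivAt_id S)
      ((hasDerivAt_const S N).sub ((((hasDerivAt_id S).pow 3).const_mul γ).div_const 3))
  have hAtilS : HasDerivAt (fun s : ℝ => Atil s (N - γ * s ^ 3 / 3))
      (fderiv ℝ f (S, N - γ * S ^ 3 / 3) ((1 : ℝ), (0 : ℝ) - γ * (3 * S ^ 2 * 1) / 3)) S :=
    (hf1 _).hasFDerivAt.comp_hasDerivAt S hcurve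
  have hsplit : fderiv ℝ f (S, N - γ * S ^ 3 / 3) ((1 : ℝ), (0 : ℝ) - γ * (3 * S ^ 2 * 1) / 3)
      = fderiv ℝ f (S, N - γ * S ^ 3 / 3) (1, 0)
        - ((γ * S ^ 2 : ℝ) : ℂ) * F1 (S, N - γ * S ^ 3 / 3) := by
    have h : ((1 : ℝ), (0 : ℝ) - γ * (3 * S ^ 2 * 1) / 3)
        = ((1:ℝ), (0:ℝ)) - (γ * S ^ 2 : ℝ) • ((0:ℝ), (1:ℝ)) := by
      simp [Prod.ext_iff]
      ring
    rw [h, map_sub, map_smul]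
    simp [hF1def, Complex.real_smul]
  have hderS : HasDerivAt (fun s => A s N)
      (Complex.exp (I * ((γ : ℂ) * (N:ℂ) * (S:ℂ) ^ 2 - (γ : ℂ) ^ 2 * (S:ℂ) ^ 5 / 10))
        * (I * ((γ : ℂ) * (N:ℂ) * (2 * (S:ℂ)) - (γ : ℂ) ^ 2 * (5 * (S:ℂ) ^ 4) / 10))
        * Atil S (N - γ * S ^ 3 / 3)
       + Complex.exp (I * ((γ : ℂ) * (N:ℂ) * (S:ℂ) ^ 2 - (γ : ℂ) ^ 2 * (S:ℂ) ^ 5 / 10))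
        * (fderiv ℝ f (S, N - γ * S ^ 3 / 3) (1, 0)
            - ((γ * S ^ 2 : ℝ) : ℂ) * F1 (S, N - γ * S ^ 3 / 3))) S := by
    have heq : (fun s => A s N) = fun s : ℝ =>
        Complex.exp (I * ((γ : ℂ) * (N:ℂ) * (s:ℂ) ^ 2 - (γ : ℂ) ^ 2 * (s:ℂ) ^ 5 / 10))
          * Atil s (N - γ * s ^ 3 / 3) := funext fun s => hdef s N
    rw [heq, ← hsplit]
    exact hexpS.mul hAtilS
  -- assemble
  rw [hder2.deriv, hderS.deriv, hdef S N]
  have hp := hpwe S (N - γ * S ^ 3 / 3)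
  set E := Complex.exp (I * ((γ : ℂ) * N * (S:ℂ) ^ 2 - (γ : ℂ) ^ 2 * (S:ℂ) ^ 5 / 10)) with hE
  set a := Atil S (N - γ * S ^ 3 / 3) with ha
  set ax := fderiv ℝ f (S, N - γ * S ^ 3 / 3) (1, 0) with hax
  set ay := F1 (S, N - γ * S ^ 3 / 3) with hay
  set ayy := fderiv ℝ F1 (S, N - γ * S ^ 3 / 3) (0, 1) with hayy
  push_cast
  linear_combination E * hp + 4 * (γ:ℂ) * (N:ℂ) * (S:ℂ) * E * a * Complex.I_sq
end

section
/- The function Ã₃₂(X,Y) = ∫_{Γ₃₂} t·exp(i(-Yt² - Xt⁴/2 + 4t⁵/(15√γ))) dt, where Γ₃₂ is a contour from e^{i9π/10}∞ to i∞, is well defined (the integral converges absolutely along such a contour for large |t|) and satisfies the parabolic wave equation ∂²Ã₃₂/∂Y² + 2i ∂Ã₃₂/∂X = 0. -/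
open Real Complex MeasureTheory Filter


open Real MeasureTheory in
/-- Auxiliary integrability lemma: a polynomially-bounded factor times the exponential of a
polynomial of degree four minus `c |u|^5` is integrable on the real line. -/
theorem atil32_aux_integrable (M C0 c cK a b : ℝ) (d : ℕ) (hM : 1 ≤ M) (hC0 : 0 ≤ C0)
    (hc : 0 < c) (hcK : 0 ≤ cK) (ha : 0 ≤ a) (hb : 0 ≤ b) :
    Integrable (fun u : ℝ =>
      M * (C0 + |u|) ^ d * Real.exp (cK + a * (C0 + |u|) ^ 2 + b * (C0 + |u|) ^ 4
        - c * |u| ^ 5)) := by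
  set g : ℝ → ℝ := fun u : ℝ =>
    M * (C0 + |u|) ^ d * Real.exp (cK + a * (C0 + |u|) ^ 2 + b * (C0 + |u|) ^ 4
      - c * |u| ^ 5) with hg_def
  have hgnn : ∀ u, 0 ≤ g u := by
    intro u
    have hx : (0:ℝ) ≤ C0 + |u| := add_nonneg hC0 (abs_nonneg u)
    have hMpos : (0:ℝ) < M := lt_of_lt_of_le one_pos hM
    rw [hg_def]
    positivity
  set A : ℝ := M + d + cK + a + b + 1 with hA_def
  have hdnn : (0:ℝ) ≤ (d : ℝ) := Nat.cast_nonneg d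
  have hA1 : 1 ≤ A := by rw [hA_def]; linarith
  set R : ℝ := max 1 (max C0 (16 * A / c)) with hR_def
  have hR1 : (1:ℝ) ≤ R := le_max_left _ _
  have hRC : C0 ≤ R := le_trans (le_max_left _ _) (le_max_right _ _)
  have hRA : 16 * A / c ≤ R := le_trans (le_max_right _ _) (le_max_right _ _)
  have hGb : ∀ u : ℝ, R ≤ |u| → g u ≤ Real.exp (-|u|) := by
    intro u hu
    have hx1 : (1:ℝ) ≤ |u| := le_trans hR1 hu
    have hxC : C0 ≤ |u| := le_trans hRC hu
    have hx16 : 16 * A / c ≤ |u| := le_trans hRA hu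
    set x : ℝ := C0 + |u| with hx_def
    have h1x : (1:ℝ) ≤ x := by rw [hx_def]; linarith
    have h0x : (0:ℝ) ≤ x := by linarith
    have hMe : M ≤ Real.exp (M * x) := by
      have h1 : M ≤ Real.exp M := by linarith [Real.add_one_le_exp M]
      have h2 : Real.exp M ≤ Real.exp (M * x) := by
        apply Real.exp_le_exp.mpr
        exact le_mul_of_one_le_right (by linarith) h1x
      linarith
    have hxd : x ^ d ≤ Real.exp ((d : ℝ) * x) := by
      have h1 : x ≤ Real.exp x := by linarith [Real.add_one_le_exp x]
      have h2 : x ^ d ≤ (Real.exp x) ^ d := pow_le_pow_left₀ h0x h1 d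
      rwa [← Real.exp_nat_mul] at h2
    have key : g u ≤ Real.exp (M * x + (d : ℝ) * x + (cK
        + a * x ^ 2 + b * x ^ 4 - c * |u| ^ 5)) := by
      rw [hg_def]
      simp only []
      rw [← hx_def, Real.exp_add, Real.exp_add]
      have he1 : (0:ℝ) < Real.exp (cK + a * x ^ 2 + b * x ^ 4 - c * |u| ^ 5) :=
        Real.exp_pos _
      have hmm : M * x ^ d ≤ Real.exp (M * x) * Real.exp ((d : ℝ) * x) :=
        mul_le_mul hMe hxd (pow_nonneg h0x d) (Real.exp_pos _).le
      exact mul_le_mul_of_nonneg_right hmm he1.le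
    refine le_trans key (Real.exp_le_exp.mpr ?_)
    have hx2x : x ≤ 2 * |u| := by rw [hx_def]; linarith
    have hx_self : x ≤ x ^ 4 := le_self_pow₀ h1x (by norm_num)
    have hx24 : x ^ 2 ≤ x ^ 4 := pow_le_pow_right₀ h1x (by norm_num)
    have hterm1 : M * x ≤ M * x ^ 4 := mul_le_mul_of_nonneg_left hx_self (by linarith)
    have hterm2 : (d : ℝ) * x ≤ (d : ℝ) * x ^ 4 := mul_le_mul_of_nonneg_left hx_self hdnn
    have hterm3 : cK ≤ cK * x ^ 4 :=
      le_mul_of_one_le_right hcK (le_trans h1x hx_self)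
    have hterm4 : a * x ^ 2 ≤ a * x ^ 4 := mul_le_mul_of_nonneg_left hx24 ha
    have hterm5 : |u| ≤ x ^ 4 := le_trans (by linarith) hx_self
    have hAx : A * x ^ 4 = M * x ^ 4 + (d : ℝ) * x ^ 4 + cK * x ^ 4 + a * x ^ 4
        + b * x ^ 4 + x ^ 4 := by rw [hA_def]; ring
    have hsum : M * x + (d : ℝ) * x + cK + a * x ^ 2 + b * x ^ 4 + |u| ≤ A * x ^ 4 := by
      linarith
    have h14 : x ^ 4 ≤ (2 * |u|) ^ 4 := pow_le_pow_left₀ h0x hx2x 4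
    have h15 : (2 * |u|) ^ 4 = 16 * |u| ^ 4 := by ring
    have h2 : 16 * A ≤ c * |u| := by
      rw [div_le_iff₀ hc] at hx16
      linarith [mul_comm |u| c]
    have hfin : A * x ^ 4 ≤ c * |u| ^ 5 := by
      have h3 : A * x ^ 4 ≤ A * (16 * |u| ^ 4) := by
        rw [← h15]
        exact mul_le_mul_of_nonneg_left h14 (by linarith)
      have h4 : A * (16 * |u| ^ 4) = 16 * A * |u| ^ 4 := by ring
      have h5 : 16 * A * |u| ^ 4 ≤ c * |u| * |u| ^ 4 :=
        mul_le_mul_of_nonneg_right h2 (pow_nonneg (abs_nonneg u) 4)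
      have h6 : c * |u| * |u| ^ 4 = c * |u| ^ 5 := by ring
      linarith
    linarith
  have hgcont : Continuous g := by
    rw [hg_def]
    fun_prop
  have hcover : (Set.univ : Set ℝ) = Set.Iic (-R) ∪ (Set.Icc (-R) R ∪ Set.Ioi R) := by
    rw [← Set.union_assoc, Set.Iic_union_Icc_eq_Iic (by linarith : -R ≤ R),
      Set.Iic_union_Ioi]
  rw [← integrableOn_univ, hcover]
  refine (IntegrableOn.union ?_ (IntegrableOn.union ?_ ?_))
  · refine Integrable.mono' (g := fun u : ℝ => Real.exp u)
      (integrableOn_exp_Iic (-R)) hgcont.aestronglyMeasurable.restrict ?_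
    filter_upwards [ae_restrict_mem measurableSet_Iic] with u hu
    have hun : u ≤ -R := hu
    have habs : |u| = -u := abs_of_neg (by linarith)
    have hu' : R ≤ |u| := by rw [habs]; linarith
    rw [Real.norm_of_nonneg (hgnn u)]
    calc g u ≤ Real.exp (-|u|) := hGb u hu'
      _ = Real.exp u := by rw [habs]; ring_nf
  · exact hgcont.continuousOn.integrableOn_Icc
  · refine Integrable.mono' (g := fun u : ℝ => Real.exp (-1 * u))
      (exp_neg_integrableOn_Ioi R one_pos) hgcont.aestronglyMeasurable.restrict ?_
    filter_upwards [ae_restrict_mem measurableSet_Ioi] with u hu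
    have hun : R < u := hu
    have habs : |u| = u := abs_of_pos (by linarith)
    have hu' : R ≤ |u| := by rw [habs]; linarith
    rw [Real.norm_of_nonneg (hgnn u)]
    calc g u ≤ Real.exp (-|u|) := hGb u hu'
      _ = Real.exp (-1 * u) := by rw [habs]; ring_nf

set_option maxHeartbeats 1000000 in

/-- With `Γ₃₂` a (piecewise-smooth, here `C¹`) contour from
`e^{i9π/10}∞` to `i∞`, parametrized by `φ : ℝ → ℂ` which coincides with the ray
`u ↦ -u e^{i9π/10}` for `u ≤ -1` and with the ray `u ↦ u i` for `u ≥ 1`, the function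
`Ã₃₂(X,Y) = ∫_{Γ₃₂} t exp(i(-Yt² - Xt⁴/2 + 4t⁵/(15√γ))) dt` is well defined (the
parametrized integrand is absolutely integrable) and satisfies the parabolic wave
equation `∂²Ã₃₂/∂Y² + 2i ∂Ã₃₂/∂X = 0`. -/
theorem Atil32_well_defined_and_pwe (γ : ℝ) (hγ : 0 < γ)
    (φ : ℝ → ℂ) (hφ : ContDiff ℝ 1 φ)
    (hleft : ∀ u : ℝ, u ≤ -1 → φ u = (-u : ℂ) * Complex.exp (I * (9 * Real.pi / 10)))
    (hright : ∀ u : ℝ, 1 ≤ u → φ u = (u : ℂ) * I)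
    (Atil : ℝ → ℝ → ℂ)
    (hdef : ∀ X Y : ℝ, Atil X Y =
      ∫ u : ℝ, φ u *
        Complex.exp (I * (-(Y : ℂ) * (φ u) ^ 2 - (X : ℂ) * (φ u) ^ 4 / 2
          + 4 * (φ u) ^ 5 / (15 * (Real.sqrt γ : ℂ)))) * deriv φ u) :
    (∀ X Y : ℝ, Integrable (fun u : ℝ =>
        φ u *
        Complex.exp (I * (-(Y : ℂ) * (φ u) ^ 2 - (X : ℂ) * (φ u) ^ 4 / 2
          + 4 * (φ u) ^ 5 / (15 * (Real.sqrt γ : ℂ)))) * deriv φ u)) ∧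
    (∀ X Y : ℝ,
      deriv (fun y => deriv (fun y' => Atil X y') y) Y
        + 2 * I * deriv (fun x => Atil x Y) X = 0) := by
  have hs : 0 < Real.sqrt γ := Real.sqrt_pos.mpr hγ
  set s : ℝ := Real.sqrt γ with hs_def
  set c : ℝ := 4 / (15 * s) with hc_def
  have hcpos : 0 < c := by rw [hc_def]; positivity
  set e : ℂ := Complex.exp (I * (9 * Real.pi / 10)) with he_def
  have he_norm : ‖e‖ = 1 := by
    rw [he_def, show I * (9 * (Real.pi : ℂ) / 10) = ((9 * Real.pi / 10 : ℝ) : ℂ) * I by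
      push_cast; ring, Complex.norm_exp_ofReal_mul_I]
  have he5 : e ^ 5 = I := by
    rw [he_def, ← Complex.exp_nat_mul]
    have h1 : (5 : ℕ) * (I * (9 * (Real.pi : ℂ) / 10)) =
        ((Real.pi / 2 : ℝ) : ℂ) * I + (2 * Real.pi * I + 2 * Real.pi * I) := by
      push_cast; ring
    rw [h1, Complex.exp_add, Complex.exp_add, Complex.exp_two_pi_mul_I,
      Complex.exp_mul_I]
    push_cast
    rw [Complex.cos_pi_div_two, Complex.sin_pi_div_two]
    ring
  -- continuity facts
  have hφc : Continuous φ := hφ.continuous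
  have hdc : Continuous (deriv φ) := hφ.continuous_deriv le_rfl
  -- bound for φ
  obtain ⟨C0', hC0'⟩ :=
    (isCompact_Icc : IsCompact (Set.Icc (-1 : ℝ) 1)).exists_bound_of_continuousOn
      hφc.continuousOn
  set C0 : ℝ := max C0' 0 with hC0_def
  have hC0n : 0 ≤ C0 := le_max_right _ _
  have hφ_bd : ∀ u : ℝ, ‖φ u‖ ≤ C0 + |u| := by
    intro u
    rcases le_or_gt u (-1) with hu | hu
    · rw [hleft u hu, norm_mul, he_norm, mul_one]
      have h2 : (-(u : ℂ)) = ((-u : ℝ) : ℂ) := by push_cast; ring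
      rw [h2, Complex.norm_real, Real.norm_eq_abs, abs_neg]
      linarith
    · rcases le_or_gt 1 u with hu2 | hu2
      · rw [hright u hu2, norm_mul, Complex.norm_I, mul_one, Complex.norm_real,
          Real.norm_eq_abs]
        linarith
      · have h1 : ‖φ u‖ ≤ C0' := hC0' u ⟨le_of_lt hu, le_of_lt hu2⟩
        have h2 : C0' ≤ C0 := le_max_left _ _
        have h3 := abs_nonneg u
        linarith
  -- bound for deriv φ
  obtain ⟨M', hM'⟩ :=
    (isCompact_Icc : IsCompact (Set.Icc (-1 : ℝ) 1)).exists_bound_of_continuousOn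
      hdc.continuousOn
  set M : ℝ := max M' 1 with hM_def
  have hM1 : (1 : ℝ) ≤ M := le_max_right _ _
  have hMpos : 0 < M := lt_of_lt_of_le one_pos hM1
  have hM : ∀ u : ℝ, ‖deriv φ u‖ ≤ M := by
    intro u
    rcases lt_or_ge u (-1) with hu | hu
    · have hev : φ =ᶠ[nhds u] fun v : ℝ => (-(v : ℂ)) * e :=
        Filter.eventuallyEq_of_mem (Iio_mem_nhds hu)
          (fun v hv => hleft v (le_of_lt hv))
      have hder : HasDerivAt (fun v : ℝ => (-(v : ℂ)) * e) (-e) u := by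
        have h0 : HasDerivAt (fun v : ℝ => ((v : ℝ) : ℂ)) 1 u :=
          (hasDerivAt_id u).ofReal_comp
        simpa using h0.neg.mul_const e
      rw [hev.deriv_eq, hder.deriv, norm_neg, he_norm]
      exact hM1
    · rcases le_or_gt u 1 with hu2 | hu2
      · exact le_trans (hM' u ⟨hu, hu2⟩) (le_max_left _ _)
      · have hev : φ =ᶠ[nhds u] fun v : ℝ => ((v : ℝ) : ℂ) * I :=
          Filter.eventuallyEq_of_mem (Ioi_mem_nhds hu2)
            (fun v hv => hright v (le_of_lt hv))
        have hder : HasDerivAt (fun v : ℝ => ((v : ℝ) : ℂ) * I) I u := by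
          have h0 : HasDerivAt (fun v : ℝ => ((v : ℝ) : ℂ)) 1 u :=
            (hasDerivAt_id u).ofReal_comp
          simpa using h0.mul_const I
        rw [hev.deriv_eq, hder.deriv, Complex.norm_I]
        exact hM1
  -- the exponent and the integrand
  set Ee : ℝ → ℝ → ℝ → ℂ := fun X Y u =>
    I * (-(Y : ℂ) * (φ u) ^ 2 - (X : ℂ) * (φ u) ^ 4 / 2
      + 4 * (φ u) ^ 5 / (15 * (s : ℂ))) with hEe_def
  set Fi : ℝ → ℝ → ℝ → ℂ := fun X Y u =>
    φ u * Complex.exp (Ee X Y u) * deriv φ u with hFi_def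
  -- tail bound on the real part of the leading exponential term
  have htail : ∀ u : ℝ,
      (I * (4 * (φ u) ^ 5 / (15 * (s : ℂ)))).re ≤ c * (C0 ^ 5 + 1) - c * |u| ^ 5 := by
    intro u
    have hs' : (s : ℂ) ≠ 0 := by
      simpa using (Complex.ofReal_ne_zero.mpr (ne_of_gt hs))
    rcases le_or_gt u (-1) with hu | hu
    · rw [hleft u hu]
      have h5 : ((-(u : ℂ)) * e) ^ 5 = (-(u : ℂ)) ^ 5 * I := by rw [mul_pow, he5]
      have heq : I * (4 * ((-(u : ℂ)) * e) ^ 5 / (15 * (s : ℂ)))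
          = ((-(c * (-u) ^ 5) : ℝ) : ℂ) := by
        rw [h5]
        calc I * (4 * ((-(u : ℂ)) ^ 5 * I) / (15 * (s : ℂ)))
            = (I * I) * (4 * (-(u : ℂ)) ^ 5 / (15 * (s : ℂ))) := by ring
          _ = -(4 * (-(u : ℂ)) ^ 5 / (15 * (s : ℂ))) := by
              rw [Complex.I_mul_I]; ring
          _ = ((-(c * (-u) ^ 5) : ℝ) : ℂ) := by rw [hc_def]; push_cast; ring
      rw [heq, Complex.ofReal_re]
      have habs : |u| = -u := abs_of_neg (by linarith)
      rw [habs]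
      have hnn : 0 ≤ c * (C0 ^ 5 + 1) := by positivity
      linarith
    · rcases le_or_gt 1 u with hu2 | hu2
      · rw [hright u hu2]
        have hI5 : I ^ 5 = I := by rw [pow_succ, Complex.I_pow_four, one_mul]
        have h5' : ((u : ℂ) * I) ^ 5 = (u : ℂ) ^ 5 * I := by rw [mul_pow, hI5]
        have heq : I * (4 * ((u : ℂ) * I) ^ 5 / (15 * (s : ℂ)))
            = ((-(c * u ^ 5) : ℝ) : ℂ) := by
          rw [h5']
          calc I * (4 * ((u : ℂ) ^ 5 * I) / (15 * (s : ℂ)))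
              = (I * I) * (4 * (u : ℂ) ^ 5 / (15 * (s : ℂ))) := by ring
            _ = -(4 * (u : ℂ) ^ 5 / (15 * (s : ℂ))) := by
                rw [Complex.I_mul_I]; ring
            _ = ((-(c * u ^ 5) : ℝ) : ℂ) := by rw [hc_def]; push_cast; ring
        rw [heq, Complex.ofReal_re]
        have habs : |u| = u := abs_of_pos (by linarith)
        rw [habs]
        have hnn : 0 ≤ c * (C0 ^ 5 + 1) := by positivity
        linarith
      · have habs : |u| ≤ 1 := abs_le.mpr ⟨le_of_lt hu, le_of_lt hu2⟩
        have h1 : (I * (4 * (φ u) ^ 5 / (15 * (s : ℂ)))).re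
            ≤ ‖I * (4 * (φ u) ^ 5 / (15 * (s : ℂ)))‖ :=
          Complex.re_le_norm _
        have h2 : ‖I * (4 * (φ u) ^ 5 / (15 * (s : ℂ)))‖ = c * ‖φ u‖ ^ 5 := by
          rw [norm_mul, norm_div, norm_mul, norm_mul, Complex.norm_I, one_mul, norm_pow]
          have h15 : ‖(15 : ℂ)‖ = 15 := by simp
          have hss : ‖((s : ℂ))‖ = s := by
            rw [Complex.norm_real, Real.norm_eq_abs, abs_of_pos hs]
          have h4 : ‖(4 : ℂ)‖ = 4 := by simp
          rw [h15, hss, h4, hc_def]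
          ring
        have hφu : ‖φ u‖ ≤ C0 := by
          have h1' := hC0' u ⟨by linarith [(abs_le.mp habs).1], by linarith [(abs_le.mp habs).2]⟩
          have h2' : C0' ≤ C0 := le_max_left _ _
          linarith
        have h3 : ‖φ u‖ ^ 5 ≤ C0 ^ 5 := pow_le_pow_left₀ (norm_nonneg _) hφu 5
        have h5 : |u| ^ 5 ≤ 1 := pow_le_one₀ (abs_nonneg _) habs
        nlinarith
  -- real part bound for the full exponent
  have hRe : ∀ X Y u : ℝ, (Ee X Y u).re ≤
      c * (C0 ^ 5 + 1) + |Y| * (C0 + |u|) ^ 2 + (|X| / 2) * (C0 + |u|) ^ 4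
        - c * |u| ^ 5 := by
    intro X Y u
    have hsplit : Ee X Y u = I * (-(Y : ℂ) * (φ u) ^ 2 - (X : ℂ) * (φ u) ^ 4 / 2)
        + I * (4 * (φ u) ^ 5 / (15 * (s : ℂ))) := by
      rw [hEe_def]; ring
    rw [hsplit, Complex.add_re]
    have h1 : (I * (-(Y : ℂ) * (φ u) ^ 2 - (X : ℂ) * (φ u) ^ 4 / 2)).re
        ≤ |Y| * (C0 + |u|) ^ 2 + (|X| / 2) * (C0 + |u|) ^ 4 := by
      refine le_trans (Complex.re_le_norm _) ?_
      rw [norm_mul, Complex.norm_I, one_mul]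
      refine le_trans (norm_sub_le _ _) ?_
      have e1 : ‖-(Y : ℂ) * (φ u) ^ 2‖ = |Y| * ‖φ u‖ ^ 2 := by
        rw [norm_mul, norm_neg, Complex.norm_real, Real.norm_eq_abs, norm_pow]
      have e2 : ‖(X : ℂ) * (φ u) ^ 4 / 2‖ = (|X| / 2) * ‖φ u‖ ^ 4 := by
        rw [norm_div, norm_mul, Complex.norm_real, Real.norm_eq_abs, norm_pow]
        norm_num
        ring
      rw [e1, e2]
      have b2 : ‖φ u‖ ^ 2 ≤ (C0 + |u|) ^ 2 :=
        pow_le_pow_left₀ (norm_nonneg _) (hφ_bd u) 2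
      have b4 : ‖φ u‖ ^ 4 ≤ (C0 + |u|) ^ 4 :=
        pow_le_pow_left₀ (norm_nonneg _) (hφ_bd u) 4
      have hy := abs_nonneg Y
      have hx := abs_nonneg X
      nlinarith
    have h2 := htail u
    linarith
  -- the dominating function
  set G : ℝ → ℝ → ℕ → ℝ → ℝ := fun a b d u =>
    M * (C0 + |u|) ^ d *
      Real.exp (c * (C0 ^ 5 + 1) + a * (C0 + |u|) ^ 2 + b * (C0 + |u|) ^ 4
        - c * |u| ^ 5) with hG_def
  have hGnonneg : ∀ a b d u, 0 ≤ G a b d u := by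
    intro a b d u
    rw [hG_def]
    have hx : (0:ℝ) ≤ C0 + |u| := add_nonneg hC0n (abs_nonneg u)
    positivity
  -- norm bound on the integrands
  have hFnorm : ∀ (k : ℕ) (X Y u : ℝ),
      ‖φ u ^ k * Fi X Y u‖ ≤ G |Y| (|X| / 2) (k + 1) u := by
    intro k X Y u
    have hx : (0:ℝ) ≤ C0 + |u| := add_nonneg hC0n (abs_nonneg u)
    rw [hG_def, hFi_def]
    simp only []
    rw [show φ u ^ k * (φ u * Complex.exp (Ee X Y u) * deriv φ u)
        = φ u ^ (k + 1) * deriv φ u * Complex.exp (Ee X Y u) by ring]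
    rw [norm_mul, norm_mul, norm_pow, Complex.norm_exp]
    have b1 : ‖φ u‖ ^ (k + 1) ≤ (C0 + |u|) ^ (k + 1) :=
      pow_le_pow_left₀ (norm_nonneg _) (hφ_bd u) _
    have b2 : ‖deriv φ u‖ ≤ M := hM u
    have b3 : Real.exp ((Ee X Y u).re) ≤
        Real.exp (c * (C0 ^ 5 + 1) + |Y| * (C0 + |u|) ^ 2 + |X| / 2 * (C0 + |u|) ^ 4
          - c * |u| ^ 5) := Real.exp_le_exp.mpr (hRe X Y u)
    calc ‖φ u‖ ^ (k + 1) * ‖deriv φ u‖ * Real.exp ((Ee X Y u).re)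
        ≤ ((C0 + |u|) ^ (k + 1) * M) * Real.exp ((Ee X Y u).re) :=
          mul_le_mul_of_nonneg_right
            (mul_le_mul b1 b2 (norm_nonneg _) (pow_nonneg hx _))
            (Real.exp_pos _).le
      _ ≤ ((C0 + |u|) ^ (k + 1) * M) *
            Real.exp (c * (C0 ^ 5 + 1) + |Y| * (C0 + |u|) ^ 2
              + |X| / 2 * (C0 + |u|) ^ 4 - c * |u| ^ 5) :=
          mul_le_mul_of_nonneg_left b3 (mul_nonneg (pow_nonneg hx _) hMpos.le)
      _ = M * (C0 + |u|) ^ (k + 1) *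
            Real.exp (c * (C0 ^ 5 + 1) + |Y| * (C0 + |u|) ^ 2
              + |X| / 2 * (C0 + |u|) ^ 4 - c * |u| ^ 5) := by ring
  -- monotonicity of G in the parameters
  have hGmono : ∀ (a a' b b' : ℝ) (d : ℕ) (u : ℝ), a ≤ a' → b ≤ b' →
      G a b d u ≤ G a' b' d u := by
    intro a a' b b' d u ha hb
    rw [hG_def]
    have hx : (0:ℝ) ≤ C0 + |u| := add_nonneg hC0n (abs_nonneg u)
    have h2 : (0:ℝ) ≤ (C0 + |u|) ^ 2 := pow_nonneg hx 2
    have h4 : (0:ℝ) ≤ (C0 + |u|) ^ 4 := pow_nonneg hx 4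
    have hexp : Real.exp (c * (C0 ^ 5 + 1) + a * (C0 + |u|) ^ 2 + b * (C0 + |u|) ^ 4
          - c * |u| ^ 5)
        ≤ Real.exp (c * (C0 ^ 5 + 1) + a' * (C0 + |u|) ^ 2 + b' * (C0 + |u|) ^ 4
          - c * |u| ^ 5) := by
      apply Real.exp_le_exp.mpr
      nlinarith
    exact mul_le_mul_of_nonneg_left hexp (mul_nonneg hMpos.le (pow_nonneg hx _))
  -- integrability of the dominating function
  have hGint : ∀ (a b : ℝ) (d : ℕ), 0 ≤ a → 0 ≤ b → Integrable (G a b d) := by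
    intro a b d ha hb
    rw [hG_def]
    exact atil32_aux_integrable M C0 c (c * (C0 ^ 5 + 1)) a b d hM1 hC0n hcpos
      (by positivity) ha hb
  -- continuity and integrability of the integrands
  have hFkcont : ∀ (k : ℕ) (X Y : ℝ), Continuous (fun u => φ u ^ k * Fi X Y u) := by
    intro k X Y
    rw [hFi_def, hEe_def]
    fun_prop
  have hFkint : ∀ (k : ℕ) (X Y : ℝ), Integrable (fun u => φ u ^ k * Fi X Y u) := by
    intro k X Y
    exact (hGint |Y| (|X| / 2) (k + 1) (abs_nonneg _) (by positivity)).mono'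
      (hFkcont k X Y).aestronglyMeasurable (ae_of_all _ fun u => hFnorm k X Y u)
  -- derivative in Y
  have keyY : ∀ (k : ℕ) (X Y : ℝ),
      HasDerivAt (fun y => ∫ u : ℝ, φ u ^ k * Fi X y u)
        (∫ u : ℝ, -I * (φ u ^ (k + 2) * Fi X Y u)) Y := by
    intro k X Y
    have hbnd : ∀ u : ℝ, ∀ y ∈ Metric.ball Y 1,
        ‖-I * (φ u ^ (k + 2) * Fi X y u)‖ ≤ G (|Y| + 1) (|X| / 2) (k + 3) u := by
      intro u y hy
      rw [norm_mul, norm_neg, Complex.norm_I, one_mul]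
      refine le_trans (hFnorm (k + 2) X y u) (hGmono _ _ _ _ _ _ ?_ le_rfl)
      have h1 : |y - Y| < 1 := by
        have h := Metric.mem_ball.mp hy
        rwa [Real.dist_eq] at h
      calc |y| = |Y + (y - Y)| := by ring_nf
        _ ≤ |Y| + |y - Y| := abs_add_le _ _
        _ ≤ |Y| + 1 := by linarith
    have hdiff : ∀ u : ℝ, ∀ y ∈ Metric.ball Y 1,
        HasDerivAt (fun y' => φ u ^ k * Fi X y' u)
          (-I * (φ u ^ (k + 2) * Fi X y u)) y := by
      intro u y _
      have h0 : HasDerivAt (fun y' : ℝ => ((y' : ℝ) : ℂ)) 1 y :=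
        (hasDerivAt_id y).ofReal_comp
      set p : ℂ := -(I * φ u ^ 2) with hp_def
      set q : ℂ := I * (-(X : ℂ) * φ u ^ 4 / 2 + 4 * φ u ^ 5 / (15 * (s : ℂ)))
        with hq_def
      have hEq : ∀ y' : ℝ, Ee X y' u = p * (y' : ℂ) + q := by
        intro y'; rw [hEe_def, hp_def, hq_def]; ring
      have h1 : HasDerivAt (fun y' : ℝ => p * ((y' : ℝ) : ℂ) + q) p y := by
        simpa using (h0.const_mul p).add_const q
      have h2 := h1.cexp.const_mul (φ u ^ (k + 1) * deriv φ u)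
      have heq : (fun y' : ℝ => φ u ^ k * Fi X y' u)
          = fun y' : ℝ => φ u ^ (k + 1) * deriv φ u * Complex.exp (p * (y' : ℂ) + q) := by
        funext y'
        rw [hFi_def]
        simp only []
        rw [hEq y']
        ring
      rw [heq]
      refine h2.congr_deriv ?_
      rw [hFi_def]
      simp only []
      rw [hEq y, hp_def]
      ring
    have h := hasDerivAt_integral_of_dominated_loc_of_deriv_le
      (F := fun y u => φ u ^ k * Fi X y u)
      (F' := fun y u => -I * (φ u ^ (k + 2) * Fi X y u))
      (bound := G (|Y| + 1) (|X| / 2) (k + 3)) (Metric.ball_mem_nhds Y one_pos)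
      (Filter.Eventually.of_forall fun y => (hFkcont k X y).aestronglyMeasurable)
      (hFkint k X Y)
      ((continuous_const.mul (hFkcont (k + 2) X Y)).aestronglyMeasurable)
      (ae_of_all _ hbnd)
      (hGint (|Y| + 1) (|X| / 2) (k + 3) (by positivity) (by positivity))
      (ae_of_all _ hdiff)
    exact h.2
  -- derivative in X
  have keyX : ∀ (X Y : ℝ),
      HasDerivAt (fun x => ∫ u : ℝ, φ u ^ 0 * Fi x Y u)
        (∫ u : ℝ, (-I / 2) * (φ u ^ 4 * Fi X Y u)) X := by
    intro X Y
    have hbnd : ∀ u : ℝ, ∀ x ∈ Metric.ball X 1,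
        ‖(-I / 2) * (φ u ^ 4 * Fi x Y u)‖ ≤ G |Y| ((|X| + 1) / 2) 5 u := by
      intro u x hx
      rw [norm_mul]
      have hI2 : ‖(-I / 2 : ℂ)‖ = 1 / 2 := by
        rw [norm_div, norm_neg, Complex.norm_I]
        norm_num
      rw [hI2]
      have h1 : ‖φ u ^ 4 * Fi x Y u‖ ≤ G |Y| (|x| / 2) (4 + 1) u := hFnorm 4 x Y u
      have h2 : G |Y| (|x| / 2) (4 + 1) u ≤ G |Y| ((|X| + 1) / 2) (4 + 1) u := by
        refine hGmono _ _ _ _ _ _ le_rfl ?_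
        have hd : |x - X| < 1 := by
          have h := Metric.mem_ball.mp hx
          rwa [Real.dist_eq] at h
        have h3 : |x| ≤ |X| + 1 := by
          calc |x| = |X + (x - X)| := by ring_nf
            _ ≤ |X| + |x - X| := abs_add_le _ _
            _ ≤ |X| + 1 := by linarith
        linarith
      have h4 := norm_nonneg (φ u ^ 4 * Fi x Y u)
      have h5 : (4 + 1 : ℕ) = 5 := rfl
      rw [h5] at h1 h2
      nlinarith
    have hdiff : ∀ u : ℝ, ∀ x ∈ Metric.ball X 1,
        HasDerivAt (fun x' => φ u ^ 0 * Fi x' Y u)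
          ((-I / 2) * (φ u ^ 4 * Fi x Y u)) x := by
      intro u x _
      have h0 : HasDerivAt (fun x' : ℝ => ((x' : ℝ) : ℂ)) 1 x :=
        (hasDerivAt_id x).ofReal_comp
      set p : ℂ := -(I * φ u ^ 4 / 2) with hp_def
      set q : ℂ := I * (-(Y : ℂ) * φ u ^ 2 + 4 * φ u ^ 5 / (15 * (s : ℂ)))
        with hq_def
      have hEq : ∀ x' : ℝ, Ee x' Y u = p * (x' : ℂ) + q := by
        intro x'; rw [hEe_def, hp_def, hq_def]; ring
      have h1 : HasDerivAt (fun x' : ℝ => p * ((x' : ℝ) : ℂ) + q) p x := by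
        simpa using (h0.const_mul p).add_const q
      have h2 := h1.cexp.const_mul (φ u * deriv φ u)
      have heq : (fun x' : ℝ => φ u ^ 0 * Fi x' Y u)
          = fun x' : ℝ => φ u * deriv φ u * Complex.exp (p * (x' : ℂ) + q) := by
        funext x'
        rw [hFi_def]
        simp only []
        rw [hEq x', pow_zero, one_mul]
        ring
      rw [heq]
      refine h2.congr_deriv ?_
      rw [hFi_def]
      simp only []
      rw [hEq x, hp_def]
      ring
    have h := hasDerivAt_integral_of_dominated_loc_of_deriv_le
      (F := fun x u => φ u ^ 0 * Fi x Y u)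
      (F' := fun x u => (-I / 2) * (φ u ^ 4 * Fi x Y u))
      (bound := G |Y| ((|X| + 1) / 2) 5) (Metric.ball_mem_nhds X one_pos)
      (Filter.Eventually.of_forall fun x => (hFkcont 0 x Y).aestronglyMeasurable)
      (hFkint 0 X Y)
      ((continuous_const.mul (hFkcont 4 X Y)).aestronglyMeasurable)
      (ae_of_all _ hbnd)
      (hGint |Y| ((|X| + 1) / 2) 5 (abs_nonneg _) (by positivity))
      (ae_of_all _ hdiff)
    exact h.2
  -- relating Atil to our notation
  have hA : ∀ X Y : ℝ, Atil X Y = ∫ u : ℝ, φ u ^ 0 * Fi X Y u := by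
    intro X Y
    rw [hdef X Y]
    congr 1
    funext u
    rw [hFi_def, hEe_def]
    simp only []
    rw [pow_zero, one_mul]
  constructor
  · intro X Y
    have h := hFkint 0 X Y
    have heq : (fun u : ℝ => φ u ^ 0 * Fi X Y u) = fun u : ℝ =>
        φ u * Complex.exp (I * (-(Y : ℂ) * (φ u) ^ 2 - (X : ℂ) * (φ u) ^ 4 / 2
          + 4 * (φ u) ^ 5 / (15 * (s : ℂ)))) * deriv φ u := by
      funext u
      rw [hFi_def, hEe_def]
      simp only []
      rw [pow_zero, one_mul]
    rwa [heq] at h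
  · intro X Y
    have hd1 : ∀ y, deriv (fun y' => Atil X y') y
        = -I * ∫ u : ℝ, φ u ^ 2 * Fi X y u := by
      intro y
      have hfun : (fun y' => Atil X y') = fun y' => ∫ u : ℝ, φ u ^ 0 * Fi X y' u :=
        funext fun y' => hA X y'
      rw [hfun, (keyY 0 X y).deriv]
      rw [show (fun u : ℝ => -I * (φ u ^ (0 + 2) * Fi X y u))
          = fun u : ℝ => -I * (φ u ^ 2 * Fi X y u) from rfl]
      exact integral_const_mul _ _
    have hd2 : deriv (fun y => deriv (fun y' => Atil X y') y) Y
        = -I * ∫ u : ℝ, -I * (φ u ^ 4 * Fi X Y u) := by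
      rw [funext hd1]
      have h := ((keyY 2 X Y).const_mul (-I)).deriv
      rw [show (fun u : ℝ => -I * (φ u ^ (2 + 2) * Fi X Y u))
          = fun u : ℝ => -I * (φ u ^ 4 * Fi X Y u) from rfl] at h
      exact h
    have hd3 : deriv (fun x => Atil x Y) X
        = (-I / 2) * ∫ u : ℝ, φ u ^ 4 * Fi X Y u := by
      have hfun : (fun x => Atil x Y) = fun x => ∫ u : ℝ, φ u ^ 0 * Fi x Y u :=
        funext fun x => hA x Y
      rw [hfun, (keyX X Y).deriv]
      exact integral_const_mul _ _
    rw [hd2, hd3, integral_const_mul]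
    ring
end
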